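/- Let Q be a generator matrix on Fin N and let t ≥ 0. Then every entry of the matrix exponential exp(t • Qᵀ) is nonnegative and every column of exp(t • Qᵀ) sums to 1; consequently, for every μ in the probability simplex Δ, the vector exp(t • Qᵀ) *ᵥ μ lies in Δ. -/

import Mathlib

open Matrix

private lemma exp_entry_nonneg' {N : ℕ} (A : Matrix (Fin N) (Fin N) ℝ)
    (hA : ∀ i j, 0 ≤ A i j) : ∀ i j, 0 ≤ NormedSpace.exp A i j := by
  intro i j
  have hpow : ∀ n, ∀ i j, 0 ≤ (A ^ n) i j := by
    intro n
    induction n with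
    | zero => intro i j; simp [Matrix.one_apply]; positivity
    | succ n ih =>
      intro i j
      rw [pow_succ, Matrix.mul_apply]
      exact Finset.sum_nonneg fun k _ => mul_nonneg (ih i k) (hA k j)
  have hs : Summable (fun n : ℕ => (Nat.factorial n : ℝ)⁻¹ • A ^ n) := by
    letI : NormedRing (Matrix (Fin N) (Fin N) ℝ) := Matrix.linftyOpNormedRing
    letI : NormedAlgebra ℝ (Matrix (Fin N) (Fin N) ℝ) := Matrix.linftyOpNormedAlgebra
    exact NormedSpace.expSeries_summable' (𝕂 := ℝ) A
  rw [NormedSpace.exp_eq_tsum ℝ]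
  show 0 ≤ (∑' n : ℕ, (Nat.factorial n : ℝ)⁻¹ • A ^ n) i j
  have e1 : (∑' n : ℕ, (Nat.factorial n : ℝ)⁻¹ • A ^ n) i =
      ∑' n : ℕ, ((Nat.factorial n : ℝ)⁻¹ • A ^ n) i := tsum_apply hs
  rw [e1, tsum_apply (Pi.summable.mp hs i)]
  refine tsum_nonneg fun n => ?_
  show 0 ≤ ((Nat.factorial n : ℝ)⁻¹ • A ^ n) i j
  simp only [Matrix.smul_apply, smul_eq_mul]
  have := hpow n i j
  positivity

private lemma exp_mulVec_fixed' {N : ℕ} (A : Matrix (Fin N) (Fin N) ℝ)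
    (v : Fin N → ℝ) (hv : A *ᵥ v = 0) : NormedSpace.exp A *ᵥ v = v := by
  let L : Matrix (Fin N) (Fin N) ℝ →ₗ[ℝ] (Fin N → ℝ) :=
    { toFun := fun M => M *ᵥ v
      map_add' := fun M M' => Matrix.add_mulVec M M' v
      map_smul' := fun c M => (Matrix.smul_mulVec c M v) }
  have hL : Continuous L := LinearMap.continuous_of_finiteDimensional L
  have hs : Summable (fun n : ℕ => (Nat.factorial n : ℝ)⁻¹ • A ^ n) := by
    letI : NormedRing (Matrix (Fin N) (Fin N) ℝ) := Matrix.linftyOpNormedRing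
    letI : NormedAlgebra ℝ (Matrix (Fin N) (Fin N) ℝ) := Matrix.linftyOpNormedAlgebra
    exact NormedSpace.expSeries_summable' (𝕂 := ℝ) A
  have hpow : ∀ n : ℕ, 1 ≤ n → A ^ n *ᵥ v = 0 := by
    intro n hn
    obtain ⟨m, rfl⟩ := Nat.exists_eq_add_of_le hn
    rw [add_comm, pow_succ, ← Matrix.mulVec_mulVec, hv, Matrix.mulVec_zero]
  have key : L (NormedSpace.exp A) = ∑' n : ℕ, (Nat.factorial n : ℝ)⁻¹ • (A ^ n *ᵥ v) := by
    rw [NormedSpace.exp_eq_tsum ℝ]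
    show L (∑' n : ℕ, (Nat.factorial n : ℝ)⁻¹ • A ^ n) = _
    rw [hs.hasSum.map L hL |>.tsum_eq.symm]
    congr 1
    ext n
    simp [L, Matrix.smul_mulVec]
  have hfin : L (NormedSpace.exp A) = v := by
    rw [key, tsum_eq_single 0]
    · simp
    · intro n hn
      rw [hpow n (Nat.one_le_iff_ne_zero.mpr hn), smul_zero]
  exact hfin

private lemma exp_gen_nonneg_rowsum {N : ℕ}
    (Q : Matrix (Fin N) (Fin N) ℝ) (hoff : ∀ i j, i ≠ j → 0 ≤ Q i j)
    (hrow : ∀ i, ∑ j, Q i j = 0) (t : ℝ) (ht : 0 ≤ t) :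
    (∀ i j, 0 ≤ NormedSpace.exp (t • Q) i j) ∧
    (∀ i, ∑ j, NormedSpace.exp (t • Q) i j = 1) := by
  set c : ℝ := ∑ i, |Q i i| with hc
  have hci : ∀ i, -Q i i ≤ c := by
    intro i
    calc -Q i i ≤ |Q i i| := neg_le_abs _
    _ ≤ c := Finset.single_le_sum (fun j _ => abs_nonneg (Q j j)) (Finset.mem_univ i)
  have hM : ∀ i j, 0 ≤ (t • Q + (t * c) • (1 : Matrix (Fin N) (Fin N) ℝ)) i j := by
    intro i j
    by_cases h : i = j
    · subst h
      simp only [Matrix.add_apply, Matrix.smul_apply, Matrix.one_apply_eq, smul_eq_mul, mul_one]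
      nlinarith [hci i]
    · simp only [Matrix.add_apply, Matrix.smul_apply, Matrix.one_apply_ne h, smul_eq_mul, mul_zero,
        add_zero]
      exact mul_nonneg ht (hoff i j h)
  have hsplit : t • Q = (t • Q + (t * c) • (1 : Matrix (Fin N) (Fin N) ℝ)) +
      (-(t * c)) • (1 : Matrix (Fin N) (Fin N) ℝ) := by
    rw [add_assoc, ← add_smul]; simp
  have hcomm : Commute (t • Q + (t * c) • (1 : Matrix (Fin N) (Fin N) ℝ))
      ((-(t * c)) • (1 : Matrix (Fin N) (Fin N) ℝ)) :=
    Commute.smul_right (Commute.one_right _) _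
  have hexp : NormedSpace.exp (t • Q) =
      NormedSpace.exp (t • Q + (t * c) • (1 : Matrix (Fin N) (Fin N) ℝ)) *
      NormedSpace.exp ((-(t * c)) • (1 : Matrix (Fin N) (Fin N) ℝ)) := by
    conv_lhs => rw [hsplit]
    exact Matrix.exp_add_of_commute _ _ hcomm
  have hdiag : (-(t * c)) • (1 : Matrix (Fin N) (Fin N) ℝ) =
      Matrix.diagonal (fun _ => -(t * c)) := by
    ext i j
    by_cases h : i = j <;> simp [Matrix.one_apply, Matrix.diagonal, h]
  have hexp2 : NormedSpace.exp ((-(t * c)) • (1 : Matrix (Fin N) (Fin N) ℝ)) =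
      Matrix.diagonal (fun _ => Real.exp (-(t * c))) := by
    rw [hdiag, Matrix.exp_diagonal, Pi.exp_def]
    simp [← Real.exp_eq_exp_ℝ]
  constructor
  · intro i j
    rw [hexp, hexp2, Matrix.mul_diagonal]
    exact mul_nonneg (exp_entry_nonneg' _ hM i j) (Real.exp_nonneg _)
  · intro i
    have hv : (t • Q) *ᵥ (fun _ => (1 : ℝ)) = 0 := by
      funext k
      simp only [Matrix.mulVec, dotProduct, Matrix.smul_apply, smul_eq_mul, mul_one,
        Pi.zero_apply, ← Finset.mul_sum, hrow k, mul_zero]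
    have := congrFun (exp_mulVec_fixed' (t • Q) (fun _ => (1 : ℝ)) hv) i
    simpa [Matrix.mulVec, dotProduct] using this


/-- The probability simplex on `Fin N`. -/
def probSimplex (N : ℕ) : Set (Fin N → ℝ) :=
  {μ | (∀ i, 0 ≤ μ i) ∧ ∑ i, μ i = 1}

/-- A generator (transition-rate) matrix: nonnegative off-diagonal entries and zero row sums. -/
def IsGenerator {N : ℕ} (Q : Matrix (Fin N) (Fin N) ℝ) : Prop :=
  (∀ i j, i ≠ j → 0 ≤ Q i j) ∧ (∀ i, ∑ j, Q i j = 0)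

theorem exp_generator_column_stochastic {N : ℕ} (hN : 1 ≤ N)
    (Q : Matrix (Fin N) (Fin N) ℝ) (hQ : IsGenerator Q) (t : ℝ) (ht : 0 ≤ t) :
    (∀ i j, 0 ≤ NormedSpace.exp (t • Qᵀ) i j) ∧
    (∀ j, ∑ i, NormedSpace.exp (t • Qᵀ) i j = 1) ∧
    (∀ μ ∈ probSimplex N, NormedSpace.exp (t • Qᵀ) *ᵥ μ ∈ probSimplex N) := by
  obtain ⟨hoff, hrow⟩ := hQ
  obtain ⟨h1, h2⟩ := exp_gen_nonneg_rowsum Q hoff hrow t ht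
  have hT : NormedSpace.exp (t • Qᵀ) = (NormedSpace.exp (t • Q))ᵀ := by
    rw [← Matrix.transpose_smul, Matrix.exp_transpose]
  have hpos : ∀ i j, 0 ≤ NormedSpace.exp (t • Qᵀ) i j := by
    intro i j; rw [hT]; exact h1 j i
  have hcol : ∀ j, ∑ i, NormedSpace.exp (t • Qᵀ) i j = 1 := by
    intro j; rw [hT]; simpa using h2 j
  refine ⟨hpos, hcol, ?_⟩
  rintro μ ⟨hμ0, hμ1⟩
  constructor
  · intro i
    rw [Matrix.mulVec, dotProduct]
    exact Finset.sum_nonneg fun j _ => mul_nonneg (hpos i j) (hμ0 j)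
  · calc ∑ i, (NormedSpace.exp (t • Qᵀ) *ᵥ μ) i
        = ∑ j, (∑ i, NormedSpace.exp (t • Qᵀ) i j) * μ j := by
          simp_rw [Matrix.mulVec, dotProduct, Finset.sum_mul]
          exact Finset.sum_comm
    _ = ∑ j, μ j := by simp_rw [hcol, one_mul]
    _ = 1 := hμ1
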